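/- For every real z with 0 < |z| < π, (2/π) ∫₀^∞ sinh²(zx/π)/sinh²(x) dx = 1/π - (z/π) cot(z). -/

import Mathlib

open Real MeasureTheory Set

noncomputable section

namespace Stmt2Aux



/-! ### Part 0: exponential integral on `Ioi 0` -/

lemma integral_exp_neg_mul {b : ℝ} (hb : 0 < b) :
    ∫ x in Ioi (0:ℝ), Real.exp (-(b * x)) = 1 / b := by
  have hderiv : ∀ x ∈ Ioi (0:ℝ),
      HasDerivAt (fun x => -Real.exp (-(b * x)) / b) (Real.exp (-(b * x))) x := by
    intro x _
    have h1 : HasDerivAt (fun x : ℝ => -(b * x)) (-b) x := by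
      have := ((hasDerivAt_id x).const_mul b).neg; simp only [mul_one] at this; exact this
    have h2 := (Real.hasDerivAt_exp (-(b * x))).comp x h1
    refine ((h2.neg).div_const b).congr_deriv ?_
    field_simp [hb.ne']
  have hcont : ContinuousWithinAt (fun x => -Real.exp (-(b * x)) / b) (Ici (0:ℝ)) 0 :=
    Continuous.continuousWithinAt (by continuity)
  have hint : IntegrableOn (fun x => Real.exp (-(b * x))) (Ioi (0:ℝ)) := by
    simpa only [neg_mul] using exp_neg_integrableOn_Ioi 0 hb
  have htend : Filter.Tendsto (fun x => -Real.exp (-(b * x)) / b) Filter.atTop (nhds 0) := by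
    have h1 : Filter.Tendsto (fun x : ℝ => -(b * x)) Filter.atTop Filter.atBot := by
      exact Filter.tendsto_neg_atBot_iff.mpr
        ((Filter.tendsto_const_mul_atTop_of_pos hb).mpr Filter.tendsto_id)
    have h2 := (Real.tendsto_exp_atBot.comp h1).neg.div_const b
    simpa using h2
  have := integral_Ioi_of_hasDerivAt_of_tendsto hcont hderiv hint htend
  simp only [mul_zero, neg_zero, Real.exp_zero] at this
  rw [this]
  ring



lemma exp_mul_sinh_sq (a b x : ℝ) :
    Real.exp (-(b * x)) * Real.sinh (a * x) ^ 2
      = (Real.exp (-((b - 2*a) * x)) + Real.exp (-((b + 2*a) * x))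
          - 2 * Real.exp (-(b * x))) / 4 := by
  rw [Real.sinh_eq]
  have h1 : Real.exp (-((b - 2*a) * x))
      = Real.exp (a*x) * Real.exp (a*x) * Real.exp (-(b*x)) := by
    rw [← Real.exp_add, ← Real.exp_add]; ring_nf
  have h2 : Real.exp (-((b + 2*a) * x))
      = Real.exp (-(a*x)) * Real.exp (-(a*x)) * Real.exp (-(b*x)) := by
    rw [← Real.exp_add, ← Real.exp_add]; ring_nf
  have h3 : Real.exp (a*x) * Real.exp (-(a*x)) = 1 := by
    rw [← Real.exp_add]; simp
  rw [h1, h2]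
  linear_combination (-(Real.exp (-(b*x)))/2) * h3

/-- The summand family. -/
def F (a : ℝ) (n : ℕ) (x : ℝ) : ℝ :=
  4 * ((n:ℝ)+1) * (Real.exp (-(2*((n:ℝ)+1) * x)) * Real.sinh (a * x) ^ 2)

lemma F_eq (a : ℝ) (n : ℕ) (x : ℝ) :
    F a n x = ((n:ℝ)+1) * Real.exp (-((2*((n:ℝ)+1) - 2*a) * x))
      + ((n:ℝ)+1) * Real.exp (-((2*((n:ℝ)+1) + 2*a) * x))
      - 2*((n:ℝ)+1) * Real.exp (-(2*((n:ℝ)+1) * x)) := by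
  unfold F
  rw [exp_mul_sinh_sq a (2*((n:ℝ)+1)) x]
  ring

lemma rate_pos1 {a : ℝ} (ha1 : |a| < 1) (n : ℕ) : 0 < 2*((n:ℝ)+1) - 2*a := by
  have := abs_lt.mp ha1
  have : a < 1 := this.2
  have hn : (1:ℝ) ≤ (n:ℝ)+1 := by
    have : (0:ℝ) ≤ (n:ℝ) := Nat.cast_nonneg n
    linarith
  nlinarith

lemma rate_pos2 {a : ℝ} (ha1 : |a| < 1) (n : ℕ) : 0 < 2*((n:ℝ)+1) + 2*a := by
  have := (abs_lt.mp ha1).1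
  have hn : (1:ℝ) ≤ (n:ℝ)+1 := by
    have : (0:ℝ) ≤ (n:ℝ) := Nat.cast_nonneg n
    linarith
  nlinarith

lemma rate_pos3 (n : ℕ) : 0 < 2*((n:ℝ)+1) := by positivity

lemma F_integrable {a : ℝ} (ha1 : |a| < 1) (n : ℕ) :
    IntegrableOn (F a n) (Ioi (0:ℝ)) := by
  have e1 : IntegrableOn (fun x => Real.exp (-((2*((n:ℝ)+1) - 2*a) * x))) (Ioi (0:ℝ)) := by
    simpa only [neg_mul] using exp_neg_integrableOn_Ioi 0 (rate_pos1 ha1 n)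
  have e2 : IntegrableOn (fun x => Real.exp (-((2*((n:ℝ)+1) + 2*a) * x))) (Ioi (0:ℝ)) := by
    simpa only [neg_mul] using exp_neg_integrableOn_Ioi 0 (rate_pos2 ha1 n)
  have e3 : IntegrableOn (fun x => Real.exp (-(2*((n:ℝ)+1) * x))) (Ioi (0:ℝ)) := by
    simpa only [neg_mul] using exp_neg_integrableOn_Ioi 0 (rate_pos3 n)
  have : F a n = fun x => ((n:ℝ)+1) * Real.exp (-((2*((n:ℝ)+1) - 2*a) * x))
      + ((n:ℝ)+1) * Real.exp (-((2*((n:ℝ)+1) + 2*a) * x))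
      - 2*((n:ℝ)+1) * Real.exp (-(2*((n:ℝ)+1) * x)) := funext (F_eq a n)
  rw [this]
  exact ((e1.const_mul _).add (e2.const_mul _)).sub (e3.const_mul _)

lemma denom_nat_ne {a : ℝ} (ha1 : |a| < 1) (n : ℕ) : ((n:ℝ)+1)^2 - a^2 ≠ 0 := by
  have h1 : a^2 < 1 := by nlinarith [abs_lt.mp ha1, abs_nonneg a, sq_abs a]
  have hn : (1:ℝ) ≤ (n:ℝ)+1 := by
    have : (0:ℝ) ≤ (n:ℝ) := Nat.cast_nonneg n
    linarith
  nlinarith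

lemma F_integral {a : ℝ} (ha1 : |a| < 1) (n : ℕ) :
    ∫ x in Ioi (0:ℝ), F a n x = a^2 / (((n:ℝ)+1)^2 - a^2) := by
  have e1 : IntegrableOn (fun x => Real.exp (-((2*((n:ℝ)+1) - 2*a) * x))) (Ioi (0:ℝ)) := by
    simpa only [neg_mul] using exp_neg_integrableOn_Ioi 0 (rate_pos1 ha1 n)
  have e2 : IntegrableOn (fun x => Real.exp (-((2*((n:ℝ)+1) + 2*a) * x))) (Ioi (0:ℝ)) := by
    simpa only [neg_mul] using exp_neg_integrableOn_Ioi 0 (rate_pos2 ha1 n)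
  have e3 : IntegrableOn (fun x => Real.exp (-(2*((n:ℝ)+1) * x))) (Ioi (0:ℝ)) := by
    simpa only [neg_mul] using exp_neg_integrableOn_Ioi 0 (rate_pos3 n)
  have hadd : Integrable (fun x => ((n:ℝ)+1) * Real.exp (-((2*((n:ℝ)+1) - 2*a) * x))
      + ((n:ℝ)+1) * Real.exp (-((2*((n:ℝ)+1) + 2*a) * x))) (volume.restrict (Ioi (0:ℝ))) :=
    (e1.const_mul _).add (e2.const_mul _)
  have hrw : ∫ x in Ioi (0:ℝ), F a n x
      = ((n:ℝ)+1) * (1/(2*((n:ℝ)+1) - 2*a)) + ((n:ℝ)+1) * (1/(2*((n:ℝ)+1) + 2*a))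
        - 2*((n:ℝ)+1) * (1/(2*((n:ℝ)+1))) := by
    rw [show (fun x => F a n x) = fun x => (((n:ℝ)+1) * Real.exp (-((2*((n:ℝ)+1) - 2*a) * x))
      + ((n:ℝ)+1) * Real.exp (-((2*((n:ℝ)+1) + 2*a) * x)))
      - 2*((n:ℝ)+1) * Real.exp (-(2*((n:ℝ)+1) * x)) from funext fun x => by rw [F_eq]]
    rw [integral_sub hadd (e3.const_mul _),
      integral_add (e1.const_mul _) (e2.const_mul _), integral_const_mul, integral_const_mul,
      integral_const_mul, integral_exp_neg_mul (rate_pos1 ha1 n),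
      integral_exp_neg_mul (rate_pos2 ha1 n), integral_exp_neg_mul (rate_pos3 n)]
  rw [hrw]
  have h1 := rate_pos1 ha1 n
  have h2 := rate_pos2 ha1 n
  have h3 := rate_pos3 n
  have hd := denom_nat_ne ha1 n
  have h1' : (n:ℝ) + 1 - a ≠ 0 := by linarith
  have h2' : (n:ℝ) + 1 + a ≠ 0 := by linarith
  field_simp
  ring

lemma summable_vals {a : ℝ} (ha1 : |a| < 1) :
    Summable (fun n : ℕ => a^2 / (((n:ℝ)+1)^2 - a^2)) := by
  have ha2 : a^2 < 1 := by nlinarith [abs_lt.mp ha1, abs_nonneg a, sq_abs a]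
  have hbase : Summable (fun n : ℕ => 1/((n:ℝ)+1)^2) := by
    have := (Real.summable_one_div_nat_pow (p := 2)).mpr one_lt_two
    have := (summable_nat_add_iff (f := fun n : ℕ => 1/(n:ℝ)^2) 1).mpr this
    refine this.congr fun n => ?_
    push_cast
    ring_nf
  refine Summable.of_nonneg_of_le (fun n => ?_) (fun n => ?_) (hbase.mul_left (a^2/(1-a^2)))
  · have hn : (1:ℝ) ≤ (n:ℝ)+1 := by
      have : (0:ℝ) ≤ (n:ℝ) := Nat.cast_nonneg n
      linarith
    have : 0 < ((n:ℝ)+1)^2 - a^2 := by nlinarith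
    positivity
  · have hn : (1:ℝ) ≤ (n:ℝ)+1 := by
      have : (0:ℝ) ≤ (n:ℝ) := Nat.cast_nonneg n
      linarith
    have hpos : 0 < ((n:ℝ)+1)^2 - a^2 := by nlinarith
    have h1 : 0 < 1 - a^2 := by linarith
    have hrw : a^2/(1-a^2) * (1/((n:ℝ)+1)^2) = a^2 / ((1-a^2)*((n:ℝ)+1)^2) := by
      rw [div_mul_div_comm, mul_one]
    rw [hrw]
    apply div_le_div_of_nonneg_left (sq_nonneg a) (mul_pos h1 (by positivity))
    have h2 : (1:ℝ) ≤ ((n:ℝ)+1)^2 := by nlinarith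
    nlinarith [mul_le_mul_of_nonneg_left h2 (sq_nonneg a)]

lemma F_hasSum {a x : ℝ} (hx : 0 < x) :
    HasSum (fun n => F a n x) (Real.sinh (a*x)^2 / Real.sinh x ^ 2) := by
  set q := Real.exp (-(2*x)) with hqdef
  have hq0 : 0 < q := Real.exp_pos _
  have hq1 : q < 1 := Real.exp_lt_one_iff.mpr (by linarith)
  have h0 : HasSum (fun n : ℕ => (n:ℝ) * q^n) (q/(1-q)^2) :=
    hasSum_coe_mul_geometric_of_norm_lt_one (by rw [Real.norm_eq_abs, abs_of_pos hq0]; exact hq1)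
  have h1 : HasSum (fun n : ℕ => ((n:ℝ)+1) * q^(n+1)) (q/(1-q)^2) := by
    have h1' := (hasSum_nat_add_iff (f := fun n : ℕ => (n:ℝ) * q^n) 1).mpr (by simpa using h0)
    rw [show (fun n : ℕ => ((n:ℝ)+1) * q^(n+1))
      = fun n : ℕ => ((n+1:ℕ):ℝ) * q^(n+1) from funext fun n => by push_cast; ring]
    exact h1'
  have h2 := h1.mul_left (4 * Real.sinh (a*x)^2)
  have hsinh : Real.sinh x ≠ 0 := Real.sinh_ne_zero.mpr (ne_of_gt hx)
  have hE : Real.exp x ≠ 0 := (Real.exp_pos x).ne'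
  have hq : q = (Real.exp x)⁻¹ * (Real.exp x)⁻¹ := by
    rw [hqdef, ← Real.exp_neg, ← Real.exp_add]; ring_nf
  have key : 4 * q * Real.sinh x ^ 2 = (1-q)^2 := by
    rw [hq, Real.sinh_eq, Real.exp_neg]
    field_simp
    ring
  have hval : 4 * Real.sinh (a*x)^2 * (q/(1-q)^2) = Real.sinh (a*x)^2 / Real.sinh x ^ 2 := by
    have h1q : (1:ℝ) - q ≠ 0 := by linarith
    field_simp
    linear_combination (Real.sinh (a*x)^2) * key
  have hterm : ∀ n : ℕ, 4 * Real.sinh (a*x)^2 * (((n:ℝ)+1) * q^(n+1)) = F a n x := by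
    intro n
    have : q^(n+1) = Real.exp (-(2*((n:ℝ)+1) * x)) := by
      rw [hqdef, ← Real.exp_nat_mul]
      congr 1
      push_cast
      ring
    rw [this]
    unfold F
    ring
  rw [← hval, show (fun n => F a n x)
    = fun n : ℕ => 4 * Real.sinh (a*x)^2 * (((n:ℝ)+1) * q^(n+1)) from
    funext fun n => (hterm n).symm]
  exact h2

lemma integralB {a : ℝ} (ha1 : |a| < 1) :
    ∫ x in Ioi (0:ℝ), Real.sinh (a*x)^2 / Real.sinh x ^ 2
      = ∑' n : ℕ, a^2 / (((n:ℝ)+1)^2 - a^2) := by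
  have hint : ∀ n : ℕ, Integrable (F a n) (volume.restrict (Ioi (0:ℝ))) := fun n =>
    F_integrable ha1 n
  have hnorm : ∀ n : ℕ, (∫ x in Ioi (0:ℝ), ‖F a n x‖) = a^2 / (((n:ℝ)+1)^2 - a^2) := by
    intro n
    rw [show (fun x => ‖F a n x‖) = F a n from funext fun x => Real.norm_of_nonneg (by
      unfold F; positivity)]
    exact F_integral ha1 n
  have hsum : Summable (fun n : ℕ => ∫ x in Ioi (0:ℝ), ‖F a n x‖) := by
    rw [show (fun n : ℕ => ∫ x in Ioi (0:ℝ), ‖F a n x‖)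
      = fun n : ℕ => a^2 / (((n:ℝ)+1)^2 - a^2) from funext hnorm]
    exact summable_vals ha1
  have h := integral_tsum_of_summable_integral_norm hint hsum
  have hcongr : ∫ x in Ioi (0:ℝ), Real.sinh (a*x)^2 / Real.sinh x ^ 2
      = ∫ x in Ioi (0:ℝ), ∑' n : ℕ, F a n x := by
    refine setIntegral_congr_fun measurableSet_Ioi fun x hx => ?_
    exact ((F_hasSum (a := a) hx).tsum_eq).symm
  rw [hcongr, ← h]
  exact tsum_congr fun n => F_integral ha1 n




lemma neg_one_zpow_neg (n : ℤ) : (-1:ℂ)^(-n) = (-1:ℂ)^n := by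
  rw [zpow_neg, ← inv_zpow, inv_neg_one]

lemma exp_neg_int_pi (n : ℤ) : Complex.exp (-(n:ℂ) * Complex.I * (π:ℂ)) = (-1:ℂ)^n := by
  have h : (-(n:ℂ)) * Complex.I * (π:ℂ) = ((-n : ℤ) : ℂ) * ((π:ℂ) * Complex.I) := by
    push_cast; ring
  rw [h, Complex.exp_int_mul, Complex.exp_pi_mul_I, neg_one_zpow_neg]

lemma denomR_ne {a : ℝ} (ha0 : a ≠ 0) (ha1 : |a| < 1) (n : ℤ) : a^2 - (n:ℝ)^2 ≠ 0 := by
  rcases eq_or_ne n 0 with rfl | hn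
  · simpa using pow_ne_zero 2 ha0
  · have h1 : (1:ℝ) ≤ |(n:ℝ)| := by
      rw [← Int.cast_abs]
      exact_mod_cast Int.one_le_abs hn
    have h2 : a^2 < 1 := by nlinarith [abs_lt.mp ha1, abs_nonneg a, sq_abs a]
    have h3 : (1:ℝ) ≤ (n:ℝ)^2 := by nlinarith [sq_abs ((n:ℝ))]
    nlinarith

lemma denomC_ne {a : ℝ} (ha0 : a ≠ 0) (ha1 : |a| < 1) (n : ℤ) :
    ((a:ℂ))^2 - ((n:ℤ):ℂ)^2 ≠ 0 := by
  have := denomR_ne ha0 ha1 n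
  have h : ((a:ℂ))^2 - ((n:ℤ):ℂ)^2 = ((a^2 - (n:ℝ)^2 : ℝ) : ℂ) := by push_cast; ring
  rw [h]
  exact_mod_cast this

/-- The interval integral `∫ x in -π..π, exp(-inx) cos(ax)`. -/
lemma integral_exp_mul_cos {a : ℝ} (ha0 : a ≠ 0) (ha1 : |a| < 1) (n : ℤ) :
    ∫ x in (-π:ℝ)..π, Complex.exp (-(n:ℂ) * Complex.I * (x:ℂ)) * Complex.cos ((a:ℂ) * (x:ℂ))
      = (-1:ℂ)^n * (2 * (a:ℂ) * Complex.sin ((a:ℂ) * (π:ℂ))) / ((a:ℂ)^2 - (n:ℂ)^2) := by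
  set c : ℂ := -(n:ℂ) * Complex.I with hc
  set D : ℂ := (a:ℂ)^2 - (n:ℂ)^2 with hD
  have hDne : D ≠ 0 := denomC_ne ha0 ha1 n
  have hc2 : c^2 = -((n:ℂ))^2 := by
    rw [hc]; rw [mul_pow, Complex.I_sq]; ring
  set G : ℝ → ℂ := fun x =>
    Complex.exp (c * (x:ℂ)) * (c * Complex.cos ((a:ℂ)*(x:ℂ)) + (a:ℂ) * Complex.sin ((a:ℂ)*(x:ℂ))) / D
    with hG
  have hderiv : ∀ x ∈ uIcc (-π:ℝ) π,
      HasDerivAt G (Complex.exp (c * (x:ℂ)) * Complex.cos ((a:ℂ)*(x:ℂ))) x := by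
    intro x _
    have h1 : ∀ y : ℂ, HasDerivAt (fun y : ℂ =>
        Complex.exp (c * y) * (c * Complex.cos ((a:ℂ)*y) + (a:ℂ) * Complex.sin ((a:ℂ)*y)) / D)
        (Complex.exp (c * y) * Complex.cos ((a:ℂ)*y)) y := by
      intro y
      have hexp : HasDerivAt (fun y : ℂ => Complex.exp (c * y)) (Complex.exp (c*y) * c) y := by
        have := (Complex.hasDerivAt_exp (c*y)).comp y ((hasDerivAt_id y).const_mul c); simp only [mul_one] at this; exact this
      have hcos : HasDerivAt (fun y : ℂ => Complex.cos ((a:ℂ) * y))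
          (-Complex.sin ((a:ℂ)*y) * (a:ℂ)) y := by
        have := (Complex.hasDerivAt_cos ((a:ℂ)*y)).comp y ((hasDerivAt_id y).const_mul (a:ℂ)); simp only [mul_one, neg_mul] at this; simp only [neg_mul]; exact this
      have hsin : HasDerivAt (fun y : ℂ => Complex.sin ((a:ℂ) * y))
          (Complex.cos ((a:ℂ)*y) * (a:ℂ)) y := by
        have := (Complex.hasDerivAt_sin ((a:ℂ)*y)).comp y ((hasDerivAt_id y).const_mul (a:ℂ)); simp only [mul_one] at this; exact this
      have hmul := (hexp.mul ((hcos.const_mul c).add (hsin.const_mul (a:ℂ)))).div_const D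
      refine hmul.congr_deriv ?_
      symm
      rw [eq_div_iff hDne, hD]
      simp only [Pi.add_apply]
      linear_combination (-(Complex.exp (c*y) * Complex.cos ((a:ℂ)*y))) * hc2
    exact (h1 (x:ℂ)).comp_ofReal
  have hint : IntervalIntegrable
      (fun x : ℝ => Complex.exp (c * (x:ℂ)) * Complex.cos ((a:ℂ)*(x:ℂ))) volume (-π) π := by
    apply Continuous.intervalIntegrable
    exact (Complex.continuous_exp.comp (continuous_const.mul Complex.continuous_ofReal)).mul
      (Complex.continuous_cos.comp (continuous_const.mul Complex.continuous_ofReal))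
  have heval := intervalIntegral.integral_eq_sub_of_hasDerivAt hderiv hint
  rw [heval]
  have he1 : Complex.exp (c * (π:ℂ)) = (-1:ℂ)^n := by rw [hc]; exact exp_neg_int_pi n
  have he2 : Complex.exp (c * ((-π:ℝ):ℂ)) = (-1:ℂ)^n := by
    rw [hc]
    push_cast
    rw [show -(n:ℂ) * Complex.I * (-(π:ℂ)) = -(-(n:ℂ)) * Complex.I * (π:ℂ) by ring]
    rw [show -(-(n:ℂ)) = ((-(-n) : ℤ) : ℂ) by push_cast; ring]
    have := exp_neg_int_pi (-n)
    rw [show (-((-n:ℤ):ℂ)) * Complex.I * (π:ℂ) = ((-(-n):ℤ):ℂ) * Complex.I * (π:ℂ) by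
      push_cast; ring] at this
    rw [this, neg_one_zpow_neg]
  rw [hG]
  simp only
  rw [he1, he2]
  have hcosneg : Complex.cos ((a:ℂ) * ((-π:ℝ):ℂ)) = Complex.cos ((a:ℂ) * (π:ℂ)) := by
    push_cast; rw [mul_neg, Complex.cos_neg]
  have hsinneg : Complex.sin ((a:ℂ) * ((-π:ℝ):ℂ)) = -Complex.sin ((a:ℂ) * (π:ℂ)) := by
    push_cast; rw [mul_neg, Complex.sin_neg]
  rw [hcosneg, hsinneg]
  field_simp
  ring



local instance : Fact (0 < 2*π) := ⟨by positivity⟩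

lemma fourier_at_neg_pi (n : ℤ) :
    fourier n (((-π : ℝ) : AddCircle (2*π))) = (-1:ℂ)^n := by
  rw [fourier_coe_apply, ← exp_neg_int_pi n]
  congr 1
  have hπ : ((π:ℝ):ℂ) ≠ 0 := Complex.ofReal_ne_zero.mpr pi_ne_zero
  push_cast
  field_simp

/-- The `n`-th Fourier coefficient of the periodized `cos (a x)`, as a real number. -/
def r (a : ℝ) (n : ℤ) : ℝ := (-1:ℝ)^n * a * Real.sin (a*π) / (π * (a^2 - (n:ℝ)^2))

lemma fourierCoeff_cos {a : ℝ} (ha0 : a ≠ 0) (ha1 : |a| < 1) (n : ℤ) :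
    fourierCoeff (AddCircle.liftIco (2*π) (-π) (fun x => Complex.cos ((a:ℂ)*(x:ℂ)))) n
      = ((r a n : ℝ) : ℂ) := by
  have hπ : ((π:ℝ):ℂ) ≠ 0 := Complex.ofReal_ne_zero.mpr pi_ne_zero
  have hD := denomC_ne ha0 ha1 n
  rw [fourierCoeff_liftIco_eq, fourierCoeffOn_eq_integral]
  have hI : ∫ x in (-π:ℝ)..(-π + 2*π),
        fourier (-n) ((x : ℝ) : AddCircle (-π + 2*π - -π)) • (Complex.cos ((a:ℂ)*(x:ℂ)))
      = ∫ x in (-π:ℝ)..π, Complex.exp (-(n:ℂ) * Complex.I * (x:ℂ)) * Complex.cos ((a:ℂ)*(x:ℂ)) := by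
    rw [show -π + 2*π = π from by ring]
    refine intervalIntegral.integral_congr fun x _ => ?_
    rw [fourier_coe_apply, smul_eq_mul]
    congr 2
    push_cast
    rw [show ((π:ℂ) - -(π:ℂ)) = 2*(π:ℂ) from by ring,
      div_eq_iff (mul_ne_zero two_ne_zero (Complex.ofReal_ne_zero.mpr pi_ne_zero))]
    ring
  rw [hI, integral_exp_mul_cos ha0 ha1 n]
  rw [show -π + 2*π - -π = 2*π from by ring]
  rw [Complex.real_smul]
  unfold r
  push_cast
  field_simp [hπ, hD]

lemma cont_lift (a : ℝ) :
    Continuous (AddCircle.liftIco (2*π) (-π) (fun x : ℝ => Complex.cos ((a:ℂ)*(x:ℂ)))) := by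
  apply AddCircle.liftIco_continuous
  · show Complex.cos ((a:ℂ) * ((-π:ℝ):ℂ)) = Complex.cos ((a:ℂ) * ((-π + 2*π:ℝ):ℂ))
    rw [show (-π + 2*π : ℝ) = π from by ring]
    push_cast
    rw [mul_neg, Complex.cos_neg]
  · exact (Complex.continuous_cos.comp (continuous_const.mul Complex.continuous_ofReal)).continuousOn

lemma abs_neg_one_zpow (n : ℤ) : |(-1:ℝ)^n| = 1 := by
  rcases Int.even_or_odd n with h | h
  · rw [h.neg_one_zpow, abs_one]
  · rw [h.neg_one_zpow, abs_neg, abs_one]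

lemma summable_r {a : ℝ} (ha0 : a ≠ 0) (ha1 : |a| < 1) : Summable (r a) := by
  have ha2 : a^2 < 1 := by nlinarith [abs_lt.mp ha1, abs_nonneg a, sq_abs a]
  have hg : Summable (fun n : ℤ => (|a| * |Real.sin (a*π)| / (π * (1 - a^2))) * (1/(n:ℝ)^2)) :=
    ((Real.summable_one_div_int_pow (p := 2)).mpr one_lt_two).mul_left _
  apply Summable.of_norm_bounded_eventually hg
  rw [Filter.eventually_cofinite]
  apply Set.Finite.subset (Set.finite_singleton (0:ℤ))
  intro n hn
  rw [Set.mem_singleton_iff]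
  by_contra hne
  apply hn
  have hn2 : (1:ℝ) ≤ (n:ℝ)^2 := by
    have h1 : (1:ℝ) ≤ |(n:ℝ)| := by
      rw [← Int.cast_abs]
      exact_mod_cast Int.one_le_abs hne
    nlinarith [sq_abs ((n:ℝ))]
  have hd : (0:ℝ) < (n:ℝ)^2 - a^2 := by nlinarith
  have hval : ‖r a n‖ = |a| * |Real.sin (a*π)| / (π * ((n:ℝ)^2 - a^2)) := by
    rw [Real.norm_eq_abs]
    unfold r
    rw [abs_div, abs_mul, abs_mul, abs_neg_one_zpow, one_mul,
      abs_mul, abs_of_pos pi_pos, abs_of_neg (by nlinarith : a^2 - (n:ℝ)^2 < 0)]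
    rw [show -(a^2 - (n:ℝ)^2) = (n:ℝ)^2 - a^2 from by ring]
  rw [hval]
  rw [show (|a| * |Real.sin (a*π)| / (π * (1 - a^2))) * (1/(n:ℝ)^2)
    = |a| * |Real.sin (a*π)| / ((π * (1 - a^2)) * (n:ℝ)^2) from by
      rw [div_mul_div_comm, mul_one]]
  apply div_le_div_of_nonneg_left (by positivity)
    (mul_pos (mul_pos pi_pos (by linarith)) (by nlinarith : (0:ℝ) < (n:ℝ)^2))
  nlinarith [mul_le_mul_of_nonneg_left hn2 (sq_nonneg a), pi_pos]

lemma cot_hasSum {a : ℝ} (ha0 : a ≠ 0) (ha1 : |a| < 1) :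
    HasSum (fun n : ℕ => 2*a^2 / (a^2 - ((n:ℝ)+1)^2))
      (π * a * (Real.cos (a*π) / Real.sin (a*π)) - 1) := by
  have hπ : (0:ℝ) < π := pi_pos
  have hsin : Real.sin (a*π) ≠ 0 := by
    have h1 : |a*π| < π := by
      rw [abs_mul, abs_of_pos pi_pos]
      nlinarith [abs_nonneg a]
    have h2 := abs_lt.mp h1
    rw [ne_eq, Real.sin_eq_zero_iff_of_lt_of_lt h2.1 h2.2]
    intro h
    rcases mul_eq_zero.mp h with h | h
    · exact ha0 h
    · exact pi_ne_zero h
  set g : ℤ → ℝ := fun n => a * Real.sin (a*π) / (π*(a^2 - (n:ℝ)^2)) with hg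
  set F : C(AddCircle (2*π), ℂ) :=
    ⟨AddCircle.liftIco (2*π) (-π) (fun x : ℝ => Complex.cos ((a:ℂ)*(x:ℂ))), cont_lift a⟩ with hF
  have hcoeff : ∀ n : ℤ, fourierCoeff (⇑F) n = ((r a n : ℝ) : ℂ) := fun n =>
    fourierCoeff_cos ha0 ha1 n
  have hsummable : Summable (fourierCoeff (⇑F)) := by
    rw [show fourierCoeff (⇑F) = fun n => ((r a n : ℝ) : ℂ) from funext hcoeff]
    exact ((summable_r ha0 ha1).hasSum.mapL Complex.ofRealCLM).summable
  have hpt := has_pointwise_sum_fourier_series_of_summable hsummable (((-π : ℝ) : AddCircle (2*π)))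
  have hFval : F (((-π:ℝ) : AddCircle (2*π))) = ((Real.cos (a*π) : ℝ) : ℂ) := by
    simp only [hF, ContinuousMap.coe_mk]
    rw [AddCircle.liftIco_coe_apply (by
      constructor
      · exact le_refl _
      · linarith : (-π:ℝ) ∈ Ico (-π) (-π + 2*π))]
    push_cast
    rw [mul_neg, Complex.cos_neg]
  have hneg1sq : ∀ n : ℤ, ((-1:ℂ)^n) * ((-1:ℂ)^n) = 1 := by
    intro n
    rw [← zpow_add₀ (by norm_num : (-1:ℂ) ≠ 0), show n + n = 2*n from by ring, zpow_mul]
    norm_num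
  have hterm : ∀ n : ℤ, fourierCoeff (⇑F) n • fourier n (((-π:ℝ) : AddCircle (2*π)))
      = ((g n : ℝ) : ℂ) := by
    intro n
    rw [hcoeff n, fourier_at_neg_pi n, smul_eq_mul]
    rw [hg]
    unfold r
    push_cast
    rw [show ((-1:ℂ)^n * (a:ℂ) * Complex.sin ((a:ℂ)*(π:ℂ)) / ((π:ℂ)*((a:ℂ)^2-(n:ℂ)^2))) * (-1:ℂ)^n
      = ((a:ℂ) * Complex.sin ((a:ℂ)*(π:ℂ)) / ((π:ℂ)*((a:ℂ)^2-(n:ℂ)^2))) * ((-1:ℂ)^n * (-1:ℂ)^n)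
      from by ring, hneg1sq, mul_one]
  have h2 : HasSum (fun n : ℤ => ((g n : ℝ) : ℂ)) ((Real.cos (a*π) : ℝ) : ℂ) := by
    rw [hFval] at hpt
    rw [show (fun n : ℤ => fourierCoeff (⇑F) n • fourier n (((-π:ℝ) : AddCircle (2*π))))
      = fun n : ℤ => ((g n : ℝ) : ℂ) from funext hterm] at hpt
    exact hpt
  have h3 : HasSum g (Real.cos (a*π)) := by
    have h := h2.mapL Complex.reCLM
    simpa only [Complex.reCLM_apply, Complex.ofReal_re] using h
  have h4 := h3.nat_add_neg
  have h5 : HasSum (fun n : ℕ => 2 * g (n:ℤ)) (Real.cos (a*π) + g 0) := by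
    rw [show (fun n : ℕ => 2 * g (n:ℤ)) = fun n : ℕ => g (n:ℤ) + g (-(n:ℤ)) from
      funext fun n => by
        rw [hg]
        push_cast
        ring_nf]
    exact h4
  have h6 : HasSum (fun n : ℕ => 2 * g ((n:ℤ)+1)) (Real.cos (a*π) + g 0 - 2 * g 0) := by
    apply (hasSum_nat_add_iff (f := fun n : ℕ => 2 * g (n:ℤ)) 1).mpr
    rw [Finset.sum_range_one]
    rw [show Real.cos (a*π) + g 0 - 2 * g 0 + 2 * g ((0:ℕ):ℤ) = Real.cos (a*π) + g 0 from by
      push_cast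
      ring]
    exact h5
  have h7 := h6.mul_left (π*a/Real.sin (a*π))
  have hg0 : g 0 = Real.sin (a*π)/(π*a) := by
    rw [hg]
    simp only [Int.cast_zero]
    rw [show (0:ℝ)^2 = 0 from by ring]
    field_simp
    ring
  have hfun : (fun n : ℕ => (π*a/Real.sin (a*π)) * (2 * g ((n:ℤ)+1)))
      = fun n : ℕ => 2*a^2 / (a^2 - ((n:ℝ)+1)^2) := by
    funext n
    rw [hg]
    have hd : a^2 - ((n:ℝ)+1)^2 ≠ 0 := by
      have := denomR_ne ha0 ha1 ((n:ℤ)+1)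
      push_cast at this
      exact this
    simp only
    push_cast
    field_simp [hsin, pi_ne_zero, hd]
    ring_nf
    exact mul_inv_cancel₀ (by rwa [mul_comm])
  have hvalue : (π*a/Real.sin (a*π)) * (Real.cos (a*π) + g 0 - 2 * g 0)
      = π * a * (Real.cos (a*π) / Real.sin (a*π)) - 1 := by
    rw [hg0]
    field_simp [hsin, pi_ne_zero, ha0]
    ring_nf
    rw [mul_inv_cancel₀ (by rwa [mul_comm])]
    ring
  rw [hfun, hvalue] at h7
  exact h7


end Stmt2Aux

end

theorem stmt2 (z : ℝ) (hz0 : 0 < |z|) (hz : |z| < π) :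
    (2 / π) * ∫ x in Set.Ioi (0:ℝ), (Real.sinh (z * x / π)) ^ 2 / (Real.sinh x) ^ 2
      = 1 / π - (z / π) * (Real.cos z / Real.sin z) := by
  have hπ : (0:ℝ) < π := Real.pi_pos
  have hz0' : z ≠ 0 := by
    intro h
    rw [h] at hz0
    simp at hz0
  set a : ℝ := z / π with ha
  have ha0 : a ≠ 0 := div_ne_zero hz0' Real.pi_ne_zero
  have ha1 : |a| < 1 := by
    rw [ha, abs_div, abs_of_pos hπ, div_lt_one hπ]
    exact hz
  have haz : a * π = z := div_mul_cancel₀ z Real.pi_ne_zero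
  have hint : ∫ x in Set.Ioi (0:ℝ), (Real.sinh (z * x / π)) ^ 2 / (Real.sinh x) ^ 2
      = ∑' n : ℕ, a^2 / (((n:ℝ)+1)^2 - a^2) := by
    rw [show (fun x => (Real.sinh (z * x / π)) ^ 2 / (Real.sinh x) ^ 2)
      = fun x => Real.sinh (a*x)^2 / Real.sinh x ^ 2 from funext fun x => by
        rw [ha, div_mul_eq_mul_div]]
    exact Stmt2Aux.integralB ha1
  have hA := Stmt2Aux.cot_hasSum ha0 ha1
  have hA2 := hA.div_const (-2)
  have hfun : (fun n : ℕ => (2*a^2 / (a^2 - ((n:ℝ)+1)^2)) / (-2))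
      = fun n : ℕ => a^2 / (((n:ℝ)+1)^2 - a^2) := by
    funext n
    have hd : a^2 - ((n:ℝ)+1)^2 ≠ 0 := by
      have h := Stmt2Aux.denomR_ne ha0 ha1 ((n:ℤ)+1)
      push_cast at h
      exact h
    have hd2 : ((n:ℝ)+1)^2 - a^2 ≠ 0 := fun h => hd (by linarith)
    field_simp
    ring
  rw [hfun] at hA2
  have hts := hA2.tsum_eq
  rw [hint, hts, haz, show π * a = z from by rw [mul_comm]; exact haz]
  have key : ∀ K : ℝ, (2/π) * ((z*K - 1)/(-2)) = 1/π - (z/π)*K := by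
    intro K
    field_simp
    ring
  rw [ha]
  exact key (Real.cos z / Real.sin z)
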